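/- Let a : Fin (n+1) → ℕ be strictly increasing, N ≥ 1, and suppose the range of a is a Sidon set modulo N. Then the graph S_N(a) admits an edge-label-preserving polarity at every edge: for every p : Fin (n+1) and every v : ZMod (2N) with v.val even, there exists a graph automorphism φ of S_N(a) such that φ ∘ φ is the identity, φ exchanges the vertices v and v + (2·(a p) − 1), φ maps every vertex whose representative is even to a vertex whose representative is odd, and for every q : Fin (n+1), φ maps every edge with label a q to an edge with label a q. -/

import Mathlib

/-- A set `A ⊆ ℕ` is a Sidon set modulo `N` if the sums of pairs of its
elements are pairwise distinct modulo `N`. -/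
def IsSidonModSet (N : ℕ) (A : Set ℕ) : Prop :=
  ∀ a ∈ A, ∀ b ∈ A, ∀ c ∈ A, ∀ d ∈ A,
    a + b ≡ c + d [MOD N] → (a = c ∧ b = d) ∨ (a = d ∧ b = c)

/-- The graph `S_N(a)` on `ZMod (2N)`: distinct `x, y` are adjacent iff there are
`r : Fin (n+1)` and `v : ZMod (2N)` with `v.val` even such that
`{x, y} = {v, v + (2 (a r) - 1)}`. -/
def SGraph (n N : ℕ) (a : Fin (n + 1) → ℕ) : SimpleGraph (ZMod (2 * N)) where
  Adj x y := x ≠ y ∧ ∃ r : Fin (n + 1), ∃ v : ZMod (2 * N), Even v.val ∧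
    s(x, y) = s(v, v + (2 * (a r : ZMod (2 * N)) - 1))
  symm := by
    constructor
    rintro x y ⟨hxy, r, v, hv, h⟩
    exact ⟨hxy.symm, r, v, hv, Sym2.eq_swap.trans h⟩
  loopless := by
    constructor
    rintro x ⟨hxx, -⟩
    exact hxx rfl

/-- `S_N(a)` admits an edge-label-preserving polarity at every edge. -/
theorem stmt_7 (n N : ℕ) (hN : 1 ≤ N) (a : Fin (n + 1) → ℕ)
    (ha : StrictMono a) (hS : IsSidonModSet N (Set.range a)) :
    ∀ p : Fin (n + 1), ∀ v : ZMod (2 * N), Even v.val →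
      ∃ φ : SGraph n N a ≃g SGraph n N a,
        (∀ x : ZMod (2 * N), φ (φ x) = x) ∧
        φ v = v + (2 * (a p : ZMod (2 * N)) - 1) ∧
        φ (v + (2 * (a p : ZMod (2 * N)) - 1)) = v ∧
        (∀ x : ZMod (2 * N), Even x.val → Odd (φ x).val) ∧
        (∀ q : Fin (n + 1), ∀ w : ZMod (2 * N), Even w.val →
          ∃ w' : ZMod (2 * N), Even w'.val ∧
            s(φ w, φ (w + (2 * (a q : ZMod (2 * N)) - 1)))
              = s(w', w' + (2 * (a q : ZMod (2 * N)) - 1))) := by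
  intro p v hv
  haveI : NeZero (2 * N) := ⟨by omega⟩
  set c : ZMod (2 * N) := 2 * v + (2 * (a p : ZMod (2 * N)) - 1) with hc
  -- parity via cast to ZMod 2
  have hdvd : (2 : ℕ) ∣ 2 * N := ⟨N, rfl⟩
  set f : ZMod (2 * N) →+* ZMod 2 := ZMod.castHom hdvd (ZMod 2) with hf
  have hpar : ∀ x : ZMod (2 * N), Even x.val ↔ f x = 0 := by
    intro x
    rw [hf, ZMod.castHom_apply, ← ZMod.natCast_val,
      ZMod.natCast_eq_zero_iff]
    exact ⟨fun ⟨k, hk⟩ => ⟨k, by omega⟩, fun ⟨k, hk⟩ => ⟨k, by omega⟩⟩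
  have hpar' : ∀ x : ZMod (2 * N), Odd x.val ↔ f x ≠ 0 := by
    intro x
    rw [Nat.not_even_iff_odd.symm, hpar]
  have hf2 : ∀ m : ℕ, f (2 * (m : ZMod (2 * N)) - 1) = 1 := by
    intro m
    have : f (2 * (m : ZMod (2 * N)) - 1) = 2 * (m : ZMod 2) - 1 := by
      rw [map_sub, map_mul, map_one, map_natCast, map_ofNat]
    rw [this, show (2 : ZMod 2) = 0 from by decide]
    simp only [zero_mul, zero_sub]
    decide
  have hfc : f c = 1 := by
    rw [hc]
    have : f (2 * v + (2 * (a p : ZMod (2 * N)) - 1)) =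
        2 * f v + f (2 * (a p : ZMod (2 * N)) - 1) := by
      rw [map_add, map_mul, map_ofNat]
    rw [this, hf2, show (2 : ZMod 2) = 0 from by decide]
    ring
  -- adjacency is preserved by x ↦ c - x, with labels
  have key : ∀ (q : Fin (n + 1)) (w : ZMod (2 * N)), Even w.val →
      ∃ w' : ZMod (2 * N), Even w'.val ∧
        s(c - w, c - (w + (2 * (a q : ZMod (2 * N)) - 1)))
          = s(w', w' + (2 * (a q : ZMod (2 * N)) - 1)) := by
    intro q w hw
    refine ⟨c - w - (2 * (a q : ZMod (2 * N)) - 1), ?_, ?_⟩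
    · rw [hpar]
      have : f (c - w - (2 * (a q : ZMod (2 * N)) - 1)) =
          f c - f w - f (2 * (a q : ZMod (2 * N)) - 1) := by
        simp [map_sub]
      rw [this, hfc, hf2, (hpar w).mp hw]
      decide
    · rw [Sym2.eq_swap]
      congr 1 <;> ring
  have adj_map : ∀ x y : ZMod (2 * N),
      (SGraph n N a).Adj x y → (SGraph n N a).Adj (c - x) (c - y) := by
    rintro x y ⟨hxy, r, w, hw, hs⟩
    refine ⟨fun h => hxy (by linear_combination -h), r, ?_⟩
    obtain ⟨w', hw', hs'⟩ := key r w hw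
    refine ⟨w', hw', ?_⟩
    rw [← hs']
    rw [Sym2.eq_iff] at hs
    rcases hs with ⟨h1, h2⟩ | ⟨h1, h2⟩
    · rw [h1, h2]
    · rw [h1, h2, Sym2.eq_swap]
  set e : ZMod (2 * N) ≃ ZMod (2 * N) := Equiv.subLeft c with he
  have heapp : ∀ x, e x = c - x := fun x => rfl
  have hinv : ∀ x, e (e x) = x := by
    intro x; rw [heapp, heapp]; ring
  refine ⟨⟨e, ?_⟩, hinv, ?_, ?_, ?_, ?_⟩
  · intro x y
    constructor
    · intro h
      have := adj_map _ _ h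
      rwa [← heapp, ← heapp, hinv, hinv] at this
    · intro h
      exact adj_map x y h
  · show e v = _
    rw [heapp, hc]; ring
  · show e _ = v
    rw [heapp, hc]; ring
  · intro x hx
    show Odd (e x).val
    rw [heapp, hpar']
    have : f (c - x) = f c - f x := by simp [map_sub]
    rw [this, hfc, (hpar x).mp hx]
    decide
  · intro q w hw
    obtain ⟨w', hw', hs'⟩ := key q w hw
    exact ⟨w', hw', hs'⟩
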